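/- For all natural numbers n, k₁, k₂, the following two sums are equal: ∑_{i=k₁}^{n} C(n,i) · O(i,k₁) · ( ∑_{j=k₂}^{⌊(n−i)/2⌋} C(j,k₂) · E(n−i, j) ) = ∑_{i=k₂}^{⌊(n−k₁)/2⌋} C(n, 2i) · ( ∑_{j=k₂}^{i} C(j,k₂) · E(2i, j) ) · O(n−2i, k₁), where C denotes the binomial coefficient. -/
import Mathlib


/-- `O(n,k)`: the number of set partitions of an `n`-element set into exactly `k` nonempty
blocks, each of odd cardinality. -/
noncomputable def oddStirling (n k : ℕ) : ℕ :=
  Nat.card {P : Finpartition (Finset.univ : Finset (Fin n)) //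
    P.parts.card = k ∧ ∀ b ∈ P.parts, Odd b.card}

/-- `E(m,k)`: the number of set partitions of an `m`-element set into exactly `k` nonempty
blocks, each of even cardinality. -/
noncomputable def evenStirling (m k : ℕ) : ℕ :=
  Nat.card {P : Finpartition (Finset.univ : Finset (Fin m)) //
    P.parts.card = k ∧ ∀ b ∈ P.parts, Even b.card}

lemma evenStirling_odd {m k : ℕ} (hm : Odd m) : evenStirling m k = 0 := by
  rw [evenStirling, Nat.card_eq_zero]
  left
  constructor
  rintro ⟨P, hk, hev⟩
  have hsum := P.sum_card_parts
  have heven : Even (∑ b ∈ P.parts, b.card) := Finset.even_sum _ hev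
  rw [hsum, Finset.card_univ, Fintype.card_fin] at heven
  exact (Nat.not_even_iff_odd.mpr hm) heven

lemma oddStirling_lt {n k : ℕ} (h : n < k) : oddStirling n k = 0 := by
  rw [oddStirling, Nat.card_eq_zero]
  left
  constructor
  rintro ⟨P, hk, _⟩
  have := P.card_parts_le_card
  rw [hk, Finset.card_univ, Fintype.card_fin] at this
  omega

/-- The two expressions for the dimension of the cell modules of the parity matching algebra
agree. -/
theorem stmt8 (n k₁ k₂ : ℕ) :
    ∑ i ∈ Finset.Icc k₁ n,
        n.choose i * oddStirling i k₁
          * (∑ j ∈ Finset.Icc k₂ ((n - i) / 2), j.choose k₂ * evenStirling (n - i) j)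
      = ∑ i ∈ Finset.Icc k₂ ((n - k₁) / 2),
          n.choose (2 * i) * (∑ j ∈ Finset.Icc k₂ i, j.choose k₂ * evenStirling (2 * i) j)
            * oddStirling (n - 2 * i) k₁ := by
  by_cases hkn : n < k₁
  · rw [Finset.Icc_eq_empty (by omega), Finset.sum_empty]
    rw [Finset.sum_eq_zero]
    intro t _
    rw [oddStirling_lt (by omega), Nat.mul_zero]
  push_neg at hkn
  -- extend RHS to Icc 0 ((n-k₁)/2)
  have hR : ∑ i ∈ Finset.Icc k₂ ((n - k₁) / 2),
          n.choose (2 * i) * (∑ j ∈ Finset.Icc k₂ i, j.choose k₂ * evenStirling (2 * i) j)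
            * oddStirling (n - 2 * i) k₁
      = ∑ i ∈ Finset.Icc 0 ((n - k₁) / 2),
          n.choose (2 * i) * (∑ j ∈ Finset.Icc k₂ i, j.choose k₂ * evenStirling (2 * i) j)
            * oddStirling (n - 2 * i) k₁ := by
    apply Finset.sum_subset
    · intro x hx
      simp only [Finset.mem_Icc] at hx ⊢
      omega
    · intro x hx hx'
      simp only [Finset.mem_Icc] at hx hx'
      have : x < k₂ := by omega
      rw [Finset.Icc_eq_empty (by omega), Finset.sum_empty, Nat.mul_zero, Nat.zero_mul]
  rw [hR]
  -- drop odd (n - i) terms from LHS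
  have hL : ∑ i ∈ Finset.Icc k₁ n,
        n.choose i * oddStirling i k₁
          * (∑ j ∈ Finset.Icc k₂ ((n - i) / 2), j.choose k₂ * evenStirling (n - i) j)
      = ∑ i ∈ (Finset.Icc k₁ n).filter (fun i => Even (n - i)),
        n.choose i * oddStirling i k₁
          * (∑ j ∈ Finset.Icc k₂ ((n - i) / 2), j.choose k₂ * evenStirling (n - i) j) := by
    rw [Finset.sum_filter_of_ne]
    intro x _ hne
    by_contra hodd
    apply hne
    rw [Finset.sum_eq_zero, Nat.mul_zero]
    intro j _
    rw [evenStirling_odd (Nat.odd_iff.mpr (by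
      rw [Nat.even_iff] at hodd; omega)), Nat.mul_zero]
  rw [hL]
  refine Finset.sum_nbij' (fun i => (n - i) / 2) (fun t => n - 2 * t) ?_ ?_ ?_ ?_ ?_
  · intro a ha
    simp only [Finset.mem_filter, Finset.mem_Icc] at ha ⊢
    refine ⟨Nat.zero_le _, Nat.div_le_div_right (by omega)⟩
  · intro t ht
    simp only [Finset.mem_filter, Finset.mem_Icc] at ht ⊢
    have h2 : 2 * t ≤ n - k₁ := by
      rw [Nat.le_div_iff_mul_le (by norm_num)] at ht
      omega
    refine ⟨⟨by omega, by omega⟩, ?_⟩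
    have : n - (n - 2 * t) = 2 * t := by omega
    rw [this]
    exact even_two_mul t
  · intro a ha
    simp only [Finset.mem_filter, Finset.mem_Icc] at ha
    obtain ⟨⟨h1, h2⟩, heven⟩ := ha
    obtain ⟨c, hc⟩ := heven
    show n - 2 * ((n - a) / 2) = a
    omega
  · intro t ht
    simp only [Finset.mem_Icc] at ht
    have h2 : 2 * t ≤ n - k₁ := by
      rw [Nat.le_div_iff_mul_le (by norm_num)] at ht
      omega
    show (n - (n - 2 * t)) / 2 = t
    omega
  · intro a ha
    simp only [Finset.mem_filter, Finset.mem_Icc] at ha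
    obtain ⟨⟨h1, h2⟩, heven⟩ := ha
    obtain ⟨c, hc⟩ := heven
    have h2a : 2 * ((n - a) / 2) = n - a := by omega
    simp only [h2a, Nat.sub_sub_self h2, Nat.choose_symm h2]
    ring
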